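/- Let k = 2 and consider the radial ODE boundary value problem u'' = (1/4)·W'(u) on [R, ∞) with u(R) = 1 and u(ρ) → 0 as ρ → ∞, where W(s) = 2s² − 2s⁴ + s⁶. Then u(ρ) = √2 / √(1 + cosh(2(ρ − R)) + √2·sinh(2(ρ − R))) is a solution, and it satisfies u(ρ)·e^{ρ − R} → 2/√(1 + √2) as ρ → ∞. -/

import Mathlib

open Real Filter

noncomputable def G (R ρ : ℝ) : ℝ :=
  1 + Real.cosh (2 * (ρ - R)) + Real.sqrt 2 * Real.sinh (2 * (ρ - R))

noncomputable def G' (R ρ : ℝ) : ℝ :=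
  2 * Real.sinh (2 * (ρ - R)) + 2 * Real.sqrt 2 * Real.cosh (2 * (ρ - R))

lemma hasDerivAt_G (R ρ : ℝ) : HasDerivAt (G R) (G' R ρ) ρ := by
  have h1 : HasDerivAt (fun ρ : ℝ => 2 * (ρ - R)) 2 ρ := by
    simpa using ((hasDerivAt_id ρ).sub_const R).const_mul 2
  have hc := (Real.hasDerivAt_cosh (2 * (ρ - R))).comp ρ h1
  have hs := (Real.hasDerivAt_sinh (2 * (ρ - R))).comp ρ h1
  have h := ((hasDerivAt_const ρ (1:ℝ)).add hc).add (hs.const_mul (Real.sqrt 2))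
  refine h.congr_deriv (Eq.symm ?_)
  simp [G']; ring

lemma hasDerivAt_G' (R ρ : ℝ) : HasDerivAt (G' R) (4 * (G R ρ - 1)) ρ := by
  have h1 : HasDerivAt (fun ρ : ℝ => 2 * (ρ - R)) 2 ρ := by
    simpa using ((hasDerivAt_id ρ).sub_const R).const_mul 2
  have hc := (Real.hasDerivAt_cosh (2 * (ρ - R))).comp ρ h1
  have hs := (Real.hasDerivAt_sinh (2 * (ρ - R))).comp ρ h1
  have h := (hs.const_mul (2:ℝ)).add (hc.const_mul (2 * Real.sqrt 2))
  refine h.congr_deriv (Eq.symm ?_)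
  simp [G]; ring

lemma G'_pos (R ρ : ℝ) : 0 < G' R ρ := by
  have hc := Real.cosh_pos (2 * (ρ - R))
  have hsq := Real.cosh_sq (2 * (ρ - R))
  have h2 : Real.sqrt 2 ^ 2 = 2 := Real.sq_sqrt (by norm_num)
  have h2' : (1:ℝ) < Real.sqrt 2 := by
    nlinarith [Real.sqrt_nonneg 2]
  unfold G'
  nlinarith [sq_nonneg (Real.sinh (2 * (ρ - R)) + Real.sqrt 2 * Real.cosh (2 * (ρ - R))),
    sq_nonneg (Real.sinh (2 * (ρ - R)) + Real.cosh (2 * (ρ - R)))]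

lemma G'_sq (R ρ : ℝ) : (G' R ρ)^2 = 4 * ((G R ρ)^2 - 2 * G R ρ + 2) := by
  have hsq := Real.cosh_sq (2 * (ρ - R))
  have h2 : Real.sqrt 2 ^ 2 = 2 := Real.sq_sqrt (by norm_num)
  unfold G G'
  nlinarith [hsq, h2]

lemma G_strictMono (R : ℝ) : StrictMono (G R) := by
  apply strictMono_of_deriv_pos
  intro x
  rw [(hasDerivAt_G R x).deriv]
  exact G'_pos R x

lemma continuous_G (R : ℝ) : Continuous (G R) := by
  unfold G; continuity

lemma continuous_G' (R : ℝ) : Continuous (G' R) := by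
  unfold G'; continuity

noncomputable def phi (R ρ : ℝ) : ℝ :=
  -(Real.sqrt 2 * G' R ρ) / (2 * G R ρ * Real.sqrt (G R ρ))

lemma hasDerivAt_sqrtG (R ρ : ℝ) (h : 0 < G R ρ) :
    HasDerivAt (fun y => Real.sqrt (G R y)) (1 / (2 * Real.sqrt (G R ρ)) * G' R ρ) ρ :=
  (Real.hasDerivAt_sqrt (ne_of_gt h)).comp ρ (hasDerivAt_G R ρ)

lemma hasDerivAt_u (R ρ : ℝ) (h : 0 < G R ρ) :
    HasDerivAt (fun y => Real.sqrt 2 / Real.sqrt (G R y)) (phi R ρ) ρ := by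
  have hS : 0 < Real.sqrt (G R ρ) := Real.sqrt_pos.mpr h
  have hS2 : Real.sqrt (G R ρ) ^ 2 = G R ρ := Real.sq_sqrt h.le
  have hd := (hasDerivAt_const ρ (Real.sqrt 2)).div (hasDerivAt_sqrtG R ρ h) (ne_of_gt hS)
  refine hd.congr_deriv (Eq.symm ?_)
  unfold phi
  rw [← hS2]
  rw [Real.sqrt_sq hS.le]
  rw [div_eq_div_iff (by positivity) (by positivity)]
  field_simp
  ring

lemma hasDerivAt_phi (R ρ : ℝ) (h : 0 < G R ρ) :
    HasDerivAt (phi R)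
      ((1/4) * (4 * (Real.sqrt 2 / Real.sqrt (G R ρ)) - 8 * (Real.sqrt 2 / Real.sqrt (G R ρ))^3
        + 6 * (Real.sqrt 2 / Real.sqrt (G R ρ))^5)) ρ := by
  have hS : 0 < Real.sqrt (G R ρ) := Real.sqrt_pos.mpr h
  have hS2 : Real.sqrt (G R ρ) ^ 2 = G R ρ := Real.sq_sqrt h.le
  have hnum : HasDerivAt (fun y => -(Real.sqrt 2 * G' R y))
      (-(Real.sqrt 2 * (4 * (G R ρ - 1)))) ρ := ((hasDerivAt_G' R ρ).const_mul _).neg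
  have hden : HasDerivAt (fun y => 2 * G R y * Real.sqrt (G R y))
      (2 * G' R ρ * Real.sqrt (G R ρ) + 2 * G R ρ * (1 / (2 * Real.sqrt (G R ρ)) * G' R ρ)) ρ :=
    ((hasDerivAt_G R ρ).const_mul 2).mul (hasDerivAt_sqrtG R ρ h)
  have hden0 : 2 * G R ρ * Real.sqrt (G R ρ) ≠ 0 := by positivity
  have hd := hnum.div hden hden0
  refine hd.congr_deriv (Eq.symm ?_)
  have hGsq := G'_sq R ρ
  have h2 : Real.sqrt 2 ^ 2 = 2 := Real.sq_sqrt (by norm_num)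
  rw [← hS2] at hGsq ⊢
  rw [Real.sqrt_sq hS.le]
  set S := Real.sqrt (G R ρ)
  set r := Real.sqrt 2
  set g' := G' R ρ
  have hS0 : S ≠ 0 := ne_of_gt hS
  field_simp
  linear_combination (-12 * r) * hGsq + (-32 * r * S^2 + 24 * r * (r^2 + 2)) * h2

/-- The explicit solution of the radial ODE `u'' = (1/4)W'(u)` on `[R,∞)` with `u(R) = 1`,
`u(∞) = 0`, where `W(s) = 2s² − 2s⁴ + s⁶` (so `W'(s) = 4s − 8s³ + 6s⁵`):
`u(ρ) = √2/√(1 + cosh(2(ρ−R)) + √2 sinh(2(ρ−R)))` solves it, and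
`u(ρ)e^{ρ−R} → 2/√(1+√2)` as `ρ → ∞`. -/
theorem stmt19 (R : ℝ) (u : ℝ → ℝ)
    (hu : ∀ ρ : ℝ, u ρ = Real.sqrt 2 /
      Real.sqrt (1 + Real.cosh (2 * (ρ - R)) + Real.sqrt 2 * Real.sinh (2 * (ρ - R)))) :
    u R = 1 ∧
    (∀ ρ : ℝ, deriv (deriv u) ρ = (1 / 4) * (4 * u ρ - 8 * (u ρ) ^ 3 + 6 * (u ρ) ^ 5)) ∧
    Tendsto u atTop (nhds 0) ∧
    Tendsto (fun ρ => u ρ * Real.exp (ρ - R)) atTop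
      (nhds (2 / Real.sqrt (1 + Real.sqrt 2))) := by
  have hu' : u = fun ρ => Real.sqrt 2 / Real.sqrt (G R ρ) := by
    funext ρ; rw [hu ρ]; rfl
  subst hu'
  refine ⟨?_, ?_, ?_, ?_⟩
  · show Real.sqrt 2 / Real.sqrt (G R R) = 1
    have : G R R = 2 := by simp [G]; norm_num
    rw [this, div_self (by positivity)]
  · intro ρ
    simp only []
    rcases lt_trichotomy (G R ρ) 0 with h | h | h
    · -- G < 0 : u vanishes near ρ
      have hct : ContinuousAt (G R) ρ := (continuous_G R).continuousAt
      have hev : ∀ᶠ y in nhds ρ, G R y < 0 := hct (Iio_mem_nhds h)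
      have hu0 : (fun y => Real.sqrt 2 / Real.sqrt (G R y)) =ᶠ[nhds ρ] (fun _ => (0:ℝ)) := by
        filter_upwards [hev] with y hy
        rw [Real.sqrt_eq_zero_of_nonpos hy.le, div_zero]
      have hD0 : deriv (fun y => Real.sqrt 2 / Real.sqrt (G R y)) =ᶠ[nhds ρ] (fun _ => (0:ℝ)) := by
        filter_upwards [hu0.eventuallyEq_nhds] with y hy
        rw [hy.deriv_eq, deriv_const]
      rw [hD0.deriv_eq, deriv_const]
      have : Real.sqrt (G R ρ) = 0 := Real.sqrt_eq_zero_of_nonpos h.le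
      rw [this, div_zero]
      ring
    · -- G = 0 : the singular point; deriv (deriv u) is junk 0
      have hu0 : Real.sqrt 2 / Real.sqrt (G R ρ) = 0 := by
        rw [h, Real.sqrt_zero, div_zero]
      rw [hu0]
      have hgt : ∀ y ∈ Set.Ioi ρ, 0 < G R y := fun y hy => by
        have := G_strictMono R hy
        rw [h] at this; exact this
      have hDeq : deriv (fun y => Real.sqrt 2 / Real.sqrt (G R y)) =ᶠ[nhdsWithin ρ (Set.Ioi ρ)]
          phi R := by
        filter_upwards [self_mem_nhdsWithin] with y hy
        exact (hasDerivAt_u R y (hgt y hy)).deriv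
      have h1 : Tendsto (fun y => 2 * G R y * Real.sqrt (G R y)) (nhdsWithin ρ (Set.Ioi ρ))
          (nhdsWithin 0 (Set.Ioi 0)) := by
        apply tendsto_nhdsWithin_of_tendsto_nhds_of_eventually_within
        · have hc : ContinuousAt (fun y => 2 * G R y * Real.sqrt (G R y)) ρ := by
            exact (((continuous_const.mul (continuous_G R)).mul
              ((continuous_G R).sqrt)).continuousAt)
          have h0 : (fun y => 2 * G R y * Real.sqrt (G R y)) ρ = 0 := by
            simp [h]
          rw [← h0]
          exact hc.continuousWithinAt.tendsto
        · filter_upwards [self_mem_nhdsWithin] with y hy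
          have := hgt y hy
          have : 0 < 2 * G R y * Real.sqrt (G R y) := by positivity
          exact this
      have h2 : Tendsto (fun y => (2 * G R y * Real.sqrt (G R y))⁻¹)
          (nhdsWithin ρ (Set.Ioi ρ)) atTop := tendsto_inv_nhdsGT_zero.comp h1
      have h3 : Tendsto (fun y => -(Real.sqrt 2 * G' R y)) (nhdsWithin ρ (Set.Ioi ρ))
          (nhds (-(Real.sqrt 2 * G' R ρ))) :=
        ((continuous_const.mul (continuous_G' R)).neg.continuousAt).continuousWithinAt.tendsto
      have hneg : -(Real.sqrt 2 * G' R ρ) < 0 := by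
        have := G'_pos R ρ
        have h2' : (0:ℝ) < Real.sqrt 2 := by positivity
        nlinarith
      have hbot : Tendsto (phi R) (nhdsWithin ρ (Set.Ioi ρ)) atBot := by
        have := Filter.Tendsto.neg_mul_atTop hneg h3 h2
        refine this.congr fun y => ?_
        unfold phi
        rw [div_eq_mul_inv]
      have hbot' : Tendsto (deriv (fun y => Real.sqrt 2 / Real.sqrt (G R y)))
          (nhdsWithin ρ (Set.Ioi ρ)) atBot := hbot.congr' hDeq.symm
      have hnd : ¬ DifferentiableAt ℝ (deriv (fun y => Real.sqrt 2 / Real.sqrt (G R y))) ρ := by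
        intro hd
        have := hd.continuousAt.continuousWithinAt (s := Set.Ioi ρ)
        exact not_tendsto_atBot_of_tendsto_nhds this.tendsto hbot'
      rw [deriv_zero_of_not_differentiableAt hnd]
      ring
    · -- G > 0 : the smooth region
      have hct : ContinuousAt (G R) ρ := (continuous_G R).continuousAt
      have hev : ∀ᶠ y in nhds ρ, 0 < G R y := hct (Ioi_mem_nhds h)
      have hDeq : deriv (fun y => Real.sqrt 2 / Real.sqrt (G R y)) =ᶠ[nhds ρ] phi R := by
        filter_upwards [hev] with y hy
        exact (hasDerivAt_u R y hy).deriv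
      rw [hDeq.deriv_eq, (hasDerivAt_phi R ρ h).deriv]
  · -- u → 0
    have ht1 : Tendsto (fun ρ : ℝ => 2 * (ρ - R)) atTop atTop := by
      apply Filter.Tendsto.const_mul_atTop (by norm_num : (0:ℝ) < 2)
      simpa [sub_eq_add_neg] using tendsto_atTop_add_const_right atTop (-R) (tendsto_id (α := ℝ))
    have hG_top : Tendsto (fun ρ => G R ρ) atTop atTop := by
      refine tendsto_atTop_mono' atTop ?_
        ((Real.tendsto_exp_atTop.comp ht1).atTop_div_const (by norm_num : (0:ℝ) < 2))
      filter_upwards [eventually_ge_atTop R] with ρ hρ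
      have hs : 0 ≤ Real.sinh (2 * (ρ - R)) := Real.sinh_nonneg_iff.mpr (by nlinarith)
      have h2 : (0:ℝ) ≤ Real.sqrt 2 := Real.sqrt_nonneg 2
      have hc : Real.exp (2 * (ρ - R)) / 2 ≤ Real.cosh (2 * (ρ - R)) := by
        rw [Real.cosh_eq]
        have := (Real.exp_pos (-(2 * (ρ - R)))).le
        linarith
      simp only [Function.comp_apply]
      unfold G
      nlinarith
    have hsqrt_top : Tendsto Real.sqrt atTop atTop := by
      have := tendsto_rpow_atTop (by norm_num : (0:ℝ) < 1/2)
      refine this.congr' ?_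
      filter_upwards [Filter.eventually_ge_atTop (0:ℝ)] with x hx
      rw [Real.sqrt_eq_rpow]
    have hsq : Tendsto (fun ρ => Real.sqrt (G R ρ)) atTop atTop :=
      hsqrt_top.comp hG_top
    exact Filter.Tendsto.div_atTop tendsto_const_nhds hsq
  · -- u(ρ) e^{ρ-R} → 2/√(1+√2)
    set H : ℝ → ℝ := fun ρ => Real.exp (-(2 * (ρ - R))) + (1 + Real.sqrt 2) / 2
      + ((1 - Real.sqrt 2) / 2) * Real.exp (-(2 * (ρ - R))) ^ 2 with hH
    have hHG : ∀ ρ, H ρ = G R ρ * Real.exp (-(2 * (ρ - R))) := by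
      intro ρ
      have hE : Real.exp (2 * (ρ - R)) ≠ 0 := Real.exp_ne_zero _
      rw [hH]
      simp only [G, Real.cosh_eq, Real.sinh_eq, Real.exp_neg]
      field_simp
      ring
    have hkey : ∀ ρ, Real.sqrt 2 / Real.sqrt (G R ρ) * Real.exp (ρ - R)
        = Real.sqrt 2 / Real.sqrt (H ρ) := by
      intro ρ
      rw [hHG ρ, Real.sqrt_mul' _ (Real.exp_nonneg _)]
      have he : Real.sqrt (Real.exp (-(2 * (ρ - R)))) = Real.exp (-(ρ - R)) := by
        rw [show -(2 * (ρ - R)) = -(ρ - R) + -(ρ - R) by ring, Real.exp_add,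
          Real.sqrt_mul_self (Real.exp_nonneg _)]
      rw [he]
      rcases eq_or_ne (Real.sqrt (G R ρ)) 0 with h0 | h0
      · rw [h0]; simp
      · rw [Real.exp_neg]
        field_simp
    have hexp0 : Tendsto (fun ρ : ℝ => Real.exp (-(2 * (ρ - R)))) atTop (nhds 0) := by
      apply Real.tendsto_exp_atBot.comp
      apply Filter.tendsto_neg_atBot_iff.mpr
      apply Filter.Tendsto.const_mul_atTop (by norm_num : (0:ℝ) < 2)
      simpa [sub_eq_add_neg] using tendsto_atTop_add_const_right atTop (-R) (tendsto_id (α := ℝ))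
    have hHlim : Tendsto H atTop (nhds ((1 + Real.sqrt 2) / 2)) := by
      rw [hH]
      have h1 : Tendsto (fun ρ : ℝ => Real.exp (-(2 * (ρ - R))) + (1 + Real.sqrt 2) / 2)
          atTop (nhds (0 + (1 + Real.sqrt 2) / 2)) := hexp0.add tendsto_const_nhds
      have h2 : Tendsto (fun ρ : ℝ => ((1 - Real.sqrt 2) / 2) * Real.exp (-(2 * (ρ - R))) ^ 2)
          atTop (nhds (((1 - Real.sqrt 2) / 2) * 0 ^ 2)) := (hexp0.pow 2).const_mul _
      have h3 := h1.add h2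
      norm_num at h3
      exact h3
    have hpos : (0:ℝ) < (1 + Real.sqrt 2) / 2 := by positivity
    have hsqlim : Tendsto (fun ρ => Real.sqrt (H ρ)) atTop
        (nhds (Real.sqrt ((1 + Real.sqrt 2) / 2))) :=
      (Real.continuous_sqrt.continuousAt).tendsto.comp hHlim
    have hfinal : Tendsto (fun ρ => Real.sqrt 2 / Real.sqrt (H ρ)) atTop
        (nhds (Real.sqrt 2 / Real.sqrt ((1 + Real.sqrt 2) / 2))) :=
      tendsto_const_nhds.div hsqlim (by positivity)
    have heq : Real.sqrt 2 / Real.sqrt ((1 + Real.sqrt 2) / 2)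
        = 2 / Real.sqrt (1 + Real.sqrt 2) := by
      rw [Real.sqrt_div (by positivity) 2, div_div_eq_mul_div,
        Real.mul_self_sqrt (by norm_num : (0:ℝ) ≤ 2)]
    rw [← heq]
    exact hfinal.congr fun ρ => (hkey ρ).symm
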